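/- Every continuous left unit operation λ:S→S on a right-uniformizable topological semigroup S is dicontinuous. Consequently, every right-uniformizable topological left unosemigroup is ditopological. -/

import Mathlib

open Topology

/-- Dicontinuity of a left unit operation `l` at `x`:
for every neighborhood `O` of `x` there are a neighborhood `U` of `x` and a
neighborhood `W` of `l x` in the subspace `l(S)` such that
`(W ⟍ U) ∩ l⁻¹(W) ⊆ O`, where `W ⟍ U = {z | ∃ w ∈ W, w * z ∈ U}`. -/
def LeftDicontAt {S : Type*} [TopologicalSpace S] (mul : S → S → S) (l : S → S) (x : S) : Prop :=
  ∀ O ∈ 𝓝 x, ∃ U ∈ 𝓝 x, ∃ W ∈ 𝓝[Set.range l] (l x),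
    W ⊆ Set.range l ∧ {z | l z ∈ W ∧ ∃ w ∈ W, mul w z ∈ U} ⊆ O

/-- Dicontinuity of a right unit operation `r` at `x`. -/
def RightDicontAt {S : Type*} [TopologicalSpace S] (mul : S → S → S) (r : S → S) (x : S) : Prop :=
  ∀ O ∈ 𝓝 x, ∃ U ∈ 𝓝 x, ∃ W ∈ 𝓝[Set.range r] (r x),
    W ⊆ Set.range r ∧ {z | r z ∈ W ∧ ∃ w ∈ W, mul z w ∈ U} ⊆ O

/-- Every continuous left unit operation on a right-uniformizable topological semigroup
is dicontinuous; hence every right-uniformizable topological left unosemigroup is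
ditopological. -/
theorem rightUniformizable_left_unosemigroup_ditopological {S : Type*} [UniformSpace S] [Mul S]
    (hassoc : ∀ a b c : S, a * b * c = a * (b * c))
    (hmul : Continuous fun p : S × S => p.1 * p.2)
    (hru : ∀ U ∈ uniformity S, ∃ V ∈ uniformity S,
      ∀ x y z : S, (x, z) ∈ V → (x * y, z * y) ∈ U)
    (l : S → S) (hl : Continuous l)
    (hunit : ∀ x : S, l x * x = x) :
    ∀ x : S, LeftDicontAt (· * ·) l x := by
  intro x O hO
  obtain ⟨E, hE, hEO⟩ := UniformSpace.mem_nhds_iff.mp hO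
  obtain ⟨E₀, hE₀, hE₀E⟩ := comp_mem_uniformity_sets hE
  obtain ⟨V, hV, hVmul⟩ := hru E₀ hE₀
  obtain ⟨V₀, hV₀, hV₀s, hV₀V⟩ := comp_symm_mem_uniformity_sets hV
  refine ⟨UniformSpace.ball x E₀, UniformSpace.ball_mem_nhds x hE₀,
    UniformSpace.ball (l x) V₀ ∩ Set.range l, ?_, Set.inter_subset_right, ?_⟩
  · exact Filter.inter_mem (nhdsWithin_le_nhds (UniformSpace.ball_mem_nhds _ hV₀))
      (self_mem_nhdsWithin)
  · rintro z ⟨⟨hlz, -⟩, w, ⟨hw, -⟩, hwz⟩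
    have hwlz : (w, l z) ∈ V := hV₀V ⟨l x, hV₀s.symm _ _ hw, hlz⟩
    have h1 : (w * z, z) ∈ E₀ := by
      have := hVmul w z (l z) hwlz
      rwa [hunit z] at this
    exact hEO (hE₀E ⟨w * z, hwz, h1⟩)
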